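/- Under the interference-alignment hypotheses, let X_1, …, X_p (p ≥ 1) be pairwise disjoint nonempty subsets of {1,…,k} such that Σ_{ν∈X_i} rowSpace(S_ν) = 𝔽^l for every i ∈ {2,…,p}. Then the r^p matrices Δ_{u_1 u_2 ⋯ u_p} = Γ_{1,u_1} · Γ_{2,u_2} ⋯ Γ_{p,u_p}, indexed by all tuples (u_1,…,u_p) ∈ {1,…,r}^p, form a linearly independent family in the 𝔽-vector space of l × l matrices over 𝔽; in particular r^p ≤ l². -/

import Mathlib

set_option linter.unusedSectionVars false
set_option maxHeartbeats 1000000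

open Matrix Submodule

section aux
variable {𝔽 : Type*} [Field 𝔽] {m n q : Type*} [Fintype m] [Fintype n] [Fintype q]
  [DecidableEq m] [DecidableEq n] [DecidableEq q]

private lemma row_eq_sum (M : Matrix m n 𝔽) (K : Matrix n q 𝔽) (t : m) :
    (M * K) t = ∑ s, M t s • K s := by
  funext j; simp [Matrix.mul_apply, Finset.sum_apply]

private lemma row_mul_mem (M : Matrix m n 𝔽) (K : Matrix n q 𝔽) (t : m) :
    (M * K) t ∈ Submodule.span 𝔽 (Set.range K) := by
  rw [row_eq_sum]
  exact Submodule.sum_mem _ fun s _ => Submodule.smul_mem _ _ (Submodule.subset_span ⟨s, rfl⟩)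

private lemma eq_zero_of_mul_eq_zero {M : Matrix q m 𝔽} {K : Matrix m n 𝔽}
    (hK : LinearIndependent 𝔽 K) (h : M * K = 0) : M = 0 := by
  ext t s
  have h1 : ∑ s, M t s • K s = 0 := by
    rw [← row_eq_sum, h]; rfl
  exact Fintype.linearIndependent_iff.mp hK (M t) h1 s

private lemma exists_factor {M : Matrix m n 𝔽} {K : Matrix q n 𝔽}
    (h : ∀ t, M t ∈ Submodule.span 𝔽 (Set.range K)) :
    ∃ A : Matrix m q 𝔽, M = A * K := by
  choose c hc using fun t => (mem_span_range_iff_exists_fun (R := 𝔽)).mp (h t)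
  refine ⟨Matrix.of c, ?_⟩
  ext t j
  rw [Matrix.mul_apply, ← hc t]
  simp [Finset.sum_apply]

private lemma indep_extract {ι : Type*} [Fintype ι] [DecidableEq ι] {W : Type*} [AddCommGroup W]
    [Module 𝔽 W] {V : ι → Submodule 𝔽 W}
    (h : iSupIndep V) {f : ι → W} (hf : ∀ i, f i ∈ V i) (hs : ∑ i, f i = 0) :
    ∀ i, f i = 0 := by
  intro i
  have h1 : f i = -∑ j ∈ Finset.univ.erase i, f j := by
    have := Finset.add_sum_erase Finset.univ f (Finset.mem_univ i)
    rw [hs] at this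
    exact eq_neg_of_add_eq_zero_left this
  have h2 : f i ∈ ⨆ j, ⨆ (_ : j ≠ i), V j := by
    rw [h1]
    refine neg_mem (Submodule.sum_mem _ fun j hj => ?_)
    exact Submodule.mem_iSup_of_mem j (Submodule.mem_iSup_of_mem (Finset.ne_of_mem_erase hj) (hf j))
  exact (Submodule.disjoint_def.mp (h i)) (f i) (hf i) h2

private lemma indep_extract_mat {ι : Type*} [Fintype ι] [DecidableEq ι]
    {V : ι → Submodule 𝔽 (n → 𝔽)}
    (h : iSupIndep V) {f : ι → Matrix m n 𝔽} (hf : ∀ i t, f i t ∈ V i)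
    (hs : ∑ i, f i = 0) : ∀ i, f i = 0 := by
  intro i
  funext t
  have hst : ∑ j, f j t = 0 := by
    funext x
    have h := congrFun (congrFun hs t) x
    rw [Matrix.sum_apply] at h
    simpa [Finset.sum_apply] using h
  exact indep_extract h (fun j => hf j t) hst i

end aux

section main

variable {𝔽 : Type*} [Field 𝔽] {k r l : ℕ}
  (S : Fin k → Matrix (Fin (l / r)) (Fin l) 𝔽)
  (C : Fin r → Fin k → Matrix (Fin l) (Fin l) 𝔽)

/-- the Γ matrix of a block -/
private def Γf (X : Finset (Fin k)) (u : Fin r) : Matrix (Fin l) (Fin l) 𝔽 :=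
  if (u : ℕ) = 0 then 1 else ∑ j ∈ X, C u j

private lemma span_kill (D : Matrix (Fin l) (Fin l) 𝔽) (X : Finset (Fin k))
    (hspan : (⨆ ν ∈ X, Submodule.span 𝔽 (Set.range (S ν))) = ⊤)
    (h : ∀ ν ∈ X, S ν * D = 0) : D = 0 := by
  have hker : ∀ v : Fin l → 𝔽, v ᵥ* D = 0 := by
    intro v
    have hW : (⨆ ν ∈ X, Submodule.span 𝔽 (Set.range (S ν))) ≤
        LinearMap.ker (Matrix.vecMulLinear D) := by
      refine iSup₂_le fun ν hν => Submodule.span_le.mpr ?_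
      rintro x ⟨t, rfl⟩
      have hx : S ν t ᵥ* D = 0 := by
        have : S ν t ᵥ* D = (S ν * D) t := rfl
        rw [this, h ν hν]; rfl
      exact LinearMap.mem_ker.mpr (by simpa [Matrix.vecMulLinear_apply] using hx)
    rw [hspan] at hW
    have := hW (Submodule.mem_top (x := v))
    simpa using this
  ext s j
  have := congrFun (hker (Pi.single s 1)) j
  rwa [Matrix.single_one_vecMul] at this

private lemma rows_li (hr0 : 0 < r) (hl : 0 < l) (hrl : r ∣ l)
    (hIA3 : ∀ i : Fin k,
      (⨆ u : Fin r, Submodule.span 𝔽 (Set.range (S i * C u i))) = ⊤)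
    (i : Fin k) (u : Fin r) : LinearIndependent 𝔽 (S i * C u i) := by
  set g : Fin r × Fin (l / r) → (Fin l → 𝔽) := fun x => (S i * C x.1 i) x.2 with hg
  have hrange : Set.range g = ⋃ u : Fin r, Set.range (S i * C u i) := by
    ext x
    simp only [Set.mem_range, Set.mem_iUnion, hg]
    constructor
    · rintro ⟨⟨u, t⟩, rfl⟩; exact ⟨u, t, rfl⟩
    · rintro ⟨u, t, rfl⟩; exact ⟨⟨u, t⟩, rfl⟩
  have hspan : Submodule.span 𝔽 (Set.range g) = ⊤ := by
    rw [hrange, Submodule.span_iUnion]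
    exact hIA3 i
  have hcard : Fintype.card (Fin r × Fin (l / r)) = Module.finrank 𝔽 (Fin l → 𝔽) := by
    simp [Nat.mul_div_cancel' hrl]
  have hli : LinearIndependent 𝔽 g :=
    linearIndependent_of_top_le_span_of_card_eq_finrank (le_of_eq hspan.symm) hcard
  have : (S i * C u i) = g ∘ fun t => (u, t) := rfl
  rw [this]
  exact hli.comp _ (fun t t' h => by simpa using congrArg Prod.snd h)

private lemma factor
    (hIA1 : ∀ (i j : Fin k), j ≠ i → ∀ u : Fin r,
      Submodule.span 𝔽 (Set.range (S i * C u j)) = Submodule.span 𝔽 (Set.range (S i)))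
    (u : Fin r) {i j : Fin k} (hij : j ≠ i) :
    ∃ A : Matrix (Fin (l / r)) (Fin (l / r)) 𝔽, S i * C u j = A * S i := by
  refine exists_factor fun t => ?_
  rw [← hIA1 i j hij u]
  exact Submodule.subset_span ⟨t, rfl⟩

private lemma push_sum
    (hIA1 : ∀ (i j : Fin k), j ≠ i → ∀ u : Fin r,
      Submodule.span 𝔽 (Set.range (S i * C u j)) = Submodule.span 𝔽 (Set.range (S i)))
    (ν : Fin k) (X : Finset (Fin k)) (hν : ν ∉ X) (u : Fin r) :
    ∃ B : Matrix (Fin (l / r)) (Fin (l / r)) 𝔽,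
      S ν * (∑ j ∈ X, C u j) = B * S ν := by
  have h2 : ∀ j ∈ X, ∃ A : Matrix (Fin (l / r)) (Fin (l / r)) 𝔽, S ν * C u j = A * S ν := by
    intro j hj
    exact factor S C hIA1 u (fun h => hν (h ▸ hj))
  choose A hA using h2
  refine ⟨∑ j ∈ X.attach, A j.1 j.2, ?_⟩
  rw [Matrix.mul_sum, Matrix.sum_mul, ← Finset.sum_attach X fun j => S ν * C u j]
  exact Finset.sum_congr rfl fun j _ => hA j.1 j.2

private lemma push_one
    (hIA1 : ∀ (i j : Fin k), j ≠ i → ∀ u : Fin r,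
      Submodule.span 𝔽 (Set.range (S i * C u j)) = Submodule.span 𝔽 (Set.range (S i)))
    (ν : Fin k) (X : Finset (Fin k)) (hν : ν ∉ X) (u : Fin r) :
    ∃ A : Matrix (Fin (l / r)) (Fin (l / r)) 𝔽,
      S ν * Γf C X u = A * S ν := by
  unfold Γf
  by_cases h0 : (u : ℕ) = 0
  · exact ⟨1, by rw [if_pos h0, Matrix.mul_one, Matrix.one_mul]⟩
  · rw [if_neg h0]
    exact push_sum S C hIA1 ν X hν u

private lemma push_prod
    (hIA1 : ∀ (i j : Fin k), j ≠ i → ∀ u : Fin r,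
      Submodule.span 𝔽 (Set.range (S i * C u j)) = Submodule.span 𝔽 (Set.range (S i)))
    (ν : Fin k) :
    ∀ (p : ℕ) (Y : Fin p → Finset (Fin k)), (∀ i, ν ∉ Y i) →
      ∀ v : Fin p → Fin r,
      ∃ A : Matrix (Fin (l / r)) (Fin (l / r)) 𝔽,
        S ν * (List.ofFn fun i => Γf C (Y i) (v i)).prod = A * S ν := by
  intro p
  induction p with
  | zero =>
    intro Y hY v
    exact ⟨1, by simp⟩
  | succ p ih =>
    intro Y hY v
    obtain ⟨A0, hA0⟩ := push_one S C hIA1 ν (Y 0) (hY 0) (v 0)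
    obtain ⟨A1, hA1⟩ := ih (fun i => Y i.succ) (fun i => hY i.succ) (fun i => v i.succ)
    refine ⟨A0 * A1, ?_⟩
    rw [List.ofFn_succ, List.prod_cons, ← Matrix.mul_assoc, hA0, Matrix.mul_assoc, hA1,
      ← Matrix.mul_assoc]

end main

section main2
variable {𝔽 : Type*} [Field 𝔽] {k r l : ℕ}
  (S : Fin k → Matrix (Fin (l / r)) (Fin l) 𝔽)
  (C : Fin r → Fin k → Matrix (Fin l) (Fin l) 𝔽)

private lemma extract_G (hr : 2 ≤ r) (hl : 0 < l) (hrl : r ∣ l)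
    (hC1 : ∀ j, C ⟨0, by omega⟩ j = 1)
    (hIA1 : ∀ (i j : Fin k), j ≠ i → ∀ u : Fin r,
      Submodule.span 𝔽 (Set.range (S i * C u j)) = Submodule.span 𝔽 (Set.range (S i)))
    (hIA2 : ∀ i : Fin k, iSupIndep
      fun u : Fin r => Submodule.span 𝔽 (Set.range (S i * C u i)))
    (hIA3 : ∀ i : Fin k,
      (⨆ u : Fin r, Submodule.span 𝔽 (Set.range (S i * C u i))) = ⊤)
    (ν : Fin k) (XL : Finset (Fin k)) (hν : ν ∈ XL)
    (G : Fin r → Matrix (Fin (l / r)) (Fin (l / r)) 𝔽)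
    (hsum : ∑ w, G w * (S ν * Γf C XL w) = 0) :
    ∀ w, G w = 0 := by
  have hr0 : 0 < r := by omega
  choose B hB using fun w => push_sum S C hIA1 ν (XL.erase ν) (Finset.notMem_erase ν XL) w
  have hC0 : S ν * C ⟨0, hr0⟩ ν = S ν := by rw [hC1 ν, Matrix.mul_one]
  set E : Fin r → Matrix (Fin (l / r)) (Fin (l / r)) 𝔽 :=
    fun w => if (w : ℕ) = 0 then 0 else G w * B w with hE
  have hgw : ∀ w, G w * (S ν * Γf C XL w) = G w * (S ν * C w ν) + E w * S ν := by
    intro w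
    by_cases h0 : (w : ℕ) = 0
    · have hww : w = ⟨0, hr0⟩ := Fin.ext h0
      subst hww
      have h1 : Γf C XL (⟨0, hr0⟩ : Fin r) = 1 := if_pos rfl
      have h2 : E ⟨0, hr0⟩ = 0 := if_pos rfl
      rw [h1, h2, Matrix.mul_one, hC0, Matrix.zero_mul, add_zero]
    · have h1 : Γf C XL w = ∑ j ∈ XL, C w j := if_neg h0
      have h2 : E w = G w * B w := if_neg h0
      have hX : ∑ j ∈ XL, C w j = C w ν + ∑ j ∈ XL.erase ν, C w j :=
        (Finset.add_sum_erase XL _ hν).symm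
      rw [h1, h2, hX, Matrix.mul_add, Matrix.mul_add, hB w]
      simp only [Matrix.mul_assoc]
  have hsum2 : ∑ w : Fin r, ((G w + if (w : ℕ) = 0 then ∑ w', E w' else 0) * (S ν * C w ν)) = 0 := by
    have e1 : ∀ w : Fin r, ((G w + if (w : ℕ) = 0 then ∑ w', E w' else 0) * (S ν * C w ν))
        = G w * (S ν * C w ν) +
          (if (w : ℕ) = 0 then (∑ w', E w') * (S ν * C w ν) else 0) := by
      intro w
      rw [Matrix.add_mul]
      congr 1
      by_cases h0 : (w : ℕ) = 0
      · rw [if_pos h0, if_pos h0]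
      · rw [if_neg h0, if_neg h0, Matrix.zero_mul]
    calc ∑ w : Fin r, ((G w + if (w : ℕ) = 0 then ∑ w', E w' else 0) * (S ν * C w ν))
        = (∑ w : Fin r, G w * (S ν * C w ν)) +
            ∑ w : Fin r, (if (w : ℕ) = 0 then (∑ w', E w') * (S ν * C w ν) else 0) := by
          rw [← Finset.sum_add_distrib]
          exact Finset.sum_congr rfl fun w _ => e1 w
      _ = (∑ w : Fin r, G w * (S ν * C w ν)) + ∑ w' : Fin r, E w' * S ν := by
          congr 1
          rw [Finset.sum_eq_single_of_mem (⟨0, hr0⟩ : Fin r) (Finset.mem_univ _)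
            (fun b _ hb => if_neg (show ¬((b : ℕ) = 0) from fun h => hb (Fin.ext h)))]
          rw [if_pos rfl, hC0, Matrix.sum_mul]
      _ = ∑ w : Fin r, (G w * (S ν * C w ν) + E w * S ν) := by rw [Finset.sum_add_distrib]
      _ = ∑ w : Fin r, G w * (S ν * Γf C XL w) := Finset.sum_congr rfl fun w _ => (hgw w).symm
      _ = 0 := hsum
  have hext := indep_extract_mat (hIA2 ν)
    (f := fun w => (G w + if (w : ℕ) = 0 then ∑ w', E w' else 0) * (S ν * C w ν))
    (fun w t => row_mul_mem _ _ t) hsum2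
  have hli := rows_li S C hr0 hl hrl hIA3 ν
  have hGne : ∀ w : Fin r, (w : ℕ) ≠ 0 → G w = 0 := by
    intro w h0
    have h8 : (G w + if (w : ℕ) = 0 then ∑ w', E w' else 0) * (S ν * C w ν) = 0 := hext w
    rw [if_neg h0, add_zero] at h8
    exact eq_zero_of_mul_eq_zero (hli w) h8
  have hEzero : ∀ w' : Fin r, E w' = 0 := by
    intro w'
    by_cases h0 : (w' : ℕ) = 0
    · exact if_pos h0
    · have : E w' = G w' * B w' := if_neg h0
      rw [this, hGne w' h0, Matrix.zero_mul]
  have hG0 : G ⟨0, hr0⟩ = 0 := by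
    have h8 : (G ⟨0, hr0⟩ + if ((⟨0, hr0⟩ : Fin r) : ℕ) = 0 then ∑ w', E w' else 0) *
        (S ν * C ⟨0, hr0⟩ ν) = 0 := hext ⟨0, hr0⟩
    rw [if_pos (rfl : ((⟨0, hr0⟩ : Fin r) : ℕ) = 0),
      Finset.sum_eq_zero fun w' _ => hEzero w', add_zero] at h8
    exact eq_zero_of_mul_eq_zero (hli _) h8
  intro w
  by_cases h0 : (w : ℕ) = 0
  · rw [(Fin.ext h0 : w = ⟨0, hr0⟩)]
    exact hG0
  · exact hGne w h0

private lemma key (hr : 2 ≤ r) (hl : 0 < l) (hrl : r ∣ l)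
    (hC1 : ∀ j, C ⟨0, by omega⟩ j = 1)
    (hIA1 : ∀ (i j : Fin k), j ≠ i → ∀ u : Fin r,
      Submodule.span 𝔽 (Set.range (S i * C u j)) = Submodule.span 𝔽 (Set.range (S i)))
    (hIA2 : ∀ i : Fin k, iSupIndep
      fun u : Fin r => Submodule.span 𝔽 (Set.range (S i * C u i)))
    (hIA3 : ∀ i : Fin k,
      (⨆ u : Fin r, Submodule.span 𝔽 (Set.range (S i * C u i))) = ⊤) :
    ∀ (p : ℕ) (X : Fin p → Finset (Fin k)),
      (∀ i, (X i).Nonempty) →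
      (∀ i j, i ≠ j → Disjoint (X i) (X j)) →
      (∀ i : Fin p, (i : ℕ) ≠ 0 →
        (⨆ ν ∈ X i, Submodule.span 𝔽 (Set.range (S ν))) = ⊤) →
      ∀ a : (Fin p → Fin r) → 𝔽,
        ∑ u, a u • (List.ofFn fun i => Γf C (X i) (u i)).prod = 0 → ∀ u, a u = 0 := by
  have hr0 : 0 < r := by omega
  have hβ : 0 < l / r := Nat.div_pos (Nat.le_of_dvd hl hrl) hr0
  intro p
  induction p with
  | zero =>
    intro X hne hdisj hspan a ha u
    haveI : Unique (Fin 0 → Fin r) := ⟨⟨fun i => i.elim0⟩, fun f => funext fun i => i.elim0⟩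
    rw [Fintype.sum_unique] at ha
    have h1 : (List.ofFn fun i : Fin 0 => Γf C (X i) ((default : Fin 0 → Fin r) i)).prod = 1 := by
      simp
    rw [h1] at ha
    have hne1 : (1 : Matrix (Fin l) (Fin l) 𝔽) ≠ 0 := by
      intro h
      have := congrFun (congrFun h ⟨0, hl⟩) ⟨0, hl⟩
      simp [Matrix.one_apply] at this
    have := (smul_eq_zero.mp ha).resolve_right hne1
    rwa [Subsingleton.elim u default]
  | succ p ih =>
    intro X hne hdisj hspan a ha
    -- split the product
    have hsplit : ∀ u' : Fin (p + 1) → Fin r,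
        (List.ofFn fun i => Γf C (X i) (u' i)).prod =
          (List.ofFn fun i : Fin p => Γf C (X i.castSucc) (Fin.init u' i)).prod *
            Γf C (X (Fin.last p)) (u' (Fin.last p)) := by
      intro u'
      rw [List.ofFn_succ', List.prod_concat]
      rfl
    have hD : ∀ ν ∈ X (Fin.last p), ∀ w : Fin r,
        S ν * (∑ v : Fin p → Fin r, a (Fin.snoc v w) •
          (List.ofFn fun i : Fin p => Γf C (X i.castSucc) (v i)).prod) = 0 := by
      intro ν hν w
      have hνnot : ∀ i : Fin p, ν ∉ X i.castSucc := fun i =>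
        Finset.disjoint_right.mp
          (hdisj i.castSucc (Fin.last p) (Fin.castSucc_lt_last i).ne) hν
      choose At hAt using push_prod S C hIA1 ν p (fun i => X i.castSucc) hνnot
      -- multiply ha by S ν on the left
      have ha2 : ∑ u' : Fin (p + 1) → Fin r,
          a u' • (S ν * ((List.ofFn fun i : Fin p =>
            Γf C (X i.castSucc) (Fin.init u' i)).prod *
              Γf C (X (Fin.last p)) (u' (Fin.last p)))) = 0 := by
        have h := congrArg (fun M => S ν * M) ha
        simp only [Matrix.mul_sum, Matrix.mul_smul, Matrix.mul_zero] at h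
        calc ∑ u' : Fin (p + 1) → Fin r,
              a u' • (S ν * ((List.ofFn fun i : Fin p =>
                Γf C (X i.castSucc) (Fin.init u' i)).prod *
                  Γf C (X (Fin.last p)) (u' (Fin.last p))))
            = ∑ u' : Fin (p + 1) → Fin r,
              a u' • (S ν * (List.ofFn fun i => Γf C (X i) (u' i)).prod) :=
              Finset.sum_congr rfl fun u' _ => by rw [hsplit u']
          _ = 0 := h
      have ha3 : ∑ w' : Fin r, (∑ v : Fin p → Fin r, a (Fin.snoc v w') • At v) *
          (S ν * Γf C (X (Fin.last p)) w') = 0 := by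
        calc ∑ w' : Fin r, (∑ v : Fin p → Fin r, a (Fin.snoc v w') • At v) *
              (S ν * Γf C (X (Fin.last p)) w')
            = ∑ w' : Fin r, ∑ v : Fin p → Fin r,
                a (Fin.snoc v w') • (At v * (S ν * Γf C (X (Fin.last p)) w')) := by
              refine Finset.sum_congr rfl fun w' _ => ?_
              rw [Matrix.sum_mul]
              exact Finset.sum_congr rfl fun v _ => Matrix.smul_mul _ _ _
          _ = ∑ x : Fin r × (Fin p → Fin r),
                a (Fin.snoc x.2 x.1) • (At x.2 * (S ν * Γf C (X (Fin.last p)) x.1)) := by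
              rw [Fintype.sum_prod_type]
          _ = ∑ u' : Fin (p + 1) → Fin r,
              a u' • (S ν * ((List.ofFn fun i : Fin p =>
                Γf C (X i.castSucc) (Fin.init u' i)).prod *
                  Γf C (X (Fin.last p)) (u' (Fin.last p)))) := by
              refine Fintype.sum_bijective
                (fun x : Fin r × (Fin p → Fin r) => Fin.snoc x.2 x.1) ?_ _ _ ?_
              · exact (Fin.snocEquiv (fun _ => Fin r)).bijective
              rintro ⟨w', v⟩
              simp only [Fin.init_snoc, Fin.snoc_last]
              rw [← Matrix.mul_assoc, ← hAt v, Matrix.mul_assoc]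
          _ = 0 := ha2
      have hG := extract_G S C hr hl hrl hC1 hIA1 hIA2 hIA3 ν (X (Fin.last p)) hν
        (fun w' => ∑ v : Fin p → Fin r, a (Fin.snoc v w') • At v) ha3
      calc S ν * (∑ v : Fin p → Fin r, a (Fin.snoc v w) •
              (List.ofFn fun i : Fin p => Γf C (X i.castSucc) (v i)).prod)
          = ∑ v : Fin p → Fin r, a (Fin.snoc v w) • (S ν *
              (List.ofFn fun i : Fin p => Γf C (X i.castSucc) (v i)).prod) := by
            rw [Matrix.mul_sum]
            exact Finset.sum_congr rfl fun v _ => Matrix.mul_smul _ _ _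
        _ = ∑ v : Fin p → Fin r, a (Fin.snoc v w) • (At v * S ν) :=
            Finset.sum_congr rfl fun v _ => by rw [hAt v]
        _ = (∑ v : Fin p → Fin r, a (Fin.snoc v w) • At v) * S ν := by
            rw [Matrix.sum_mul]
            exact Finset.sum_congr rfl fun v _ => (Matrix.smul_mul _ _ _).symm
        _ = 0 := by
            have hGw : (∑ v : Fin p → Fin r, a (Fin.snoc v w) • At v) = 0 := hG w
            rw [hGw, Matrix.zero_mul]
    -- now split on p
    rcases Nat.eq_zero_or_pos p with hp0 | hp0
    · subst hp0
      intro u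
      obtain ⟨ν, hν⟩ := hne (Fin.last 0)
      have hd := hD ν hν (u (Fin.last 0))
      haveI : Unique (Fin 0 → Fin r) := ⟨⟨fun i => i.elim0⟩, fun f => funext fun i => i.elim0⟩
      rw [Fintype.sum_unique] at hd
      have hPr : (List.ofFn fun i : Fin 0 =>
          Γf C (X i.castSucc) ((default : Fin 0 → Fin r) i)).prod = 1 := by simp
      rw [hPr, Matrix.mul_smul, Matrix.mul_one] at hd
      have husnoc : Fin.snoc (default : Fin 0 → Fin r) (u (Fin.last 0)) = u := by
        funext i
        have hiL : i = Fin.last 0 := Fin.ext (by omega)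
        rw [hiL]
        exact Fin.snoc_last _ _
      rw [husnoc] at hd
      by_contra hau
      have hS0 : S ν = 0 := (smul_eq_zero.mp hd).resolve_left hau
      have hli := rows_li S C hr0 hl hrl hIA3 ν ⟨0, hr0⟩
      have hrow := hli.ne_zero ⟨0, hβ⟩
      apply hrow
      rw [hS0, Matrix.zero_mul]
      rfl
    · intro u
      have hLspan : (⨆ ν ∈ X (Fin.last p), Submodule.span 𝔽 (Set.range (S ν))) = ⊤ := by
        apply hspan (Fin.last p)
        simp only [Fin.val_last]
        omega
      have hDw : (∑ v : Fin p → Fin r, a (Fin.snoc v (u (Fin.last p))) •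
          (List.ofFn fun i : Fin p => Γf C (X i.castSucc) (v i)).prod) = 0 :=
        span_kill S _ (X (Fin.last p)) hLspan (fun ν hν => hD ν hν (u (Fin.last p)))
      have hih := ih (fun i => X i.castSucc) (fun i => hne _)
        (fun i j hij => hdisj _ _ (fun h => hij (Fin.castSucc_injective p h)))
        (fun i hi => hspan i.castSucc (by simpa using hi))
        (fun v => a (Fin.snoc v (u (Fin.last p)))) hDw (Fin.init u)
      rwa [Fin.snoc_init_self] at hih

end main2

theorem stmt_8 {𝔽 : Type*} [Field 𝔽] (k r l : ℕ)
    (hk : 0 < k) (hr : 2 ≤ r) (hl : 0 < l) (hrl : r ∣ l)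
    (S : Fin k → Matrix (Fin (l / r)) (Fin l) 𝔽)
    (C : Fin r → Fin k → Matrix (Fin l) (Fin l) 𝔽)
    (hCinv : ∀ u j, IsUnit (C u j))
    (hC1 : ∀ j, C ⟨0, by omega⟩ j = 1)
    (hIA1 : ∀ (i j : Fin k), j ≠ i → ∀ u : Fin r,
      Submodule.span 𝔽 (Set.range (S i * C u j)) = Submodule.span 𝔽 (Set.range (S i)))
    (hIA2 : ∀ i : Fin k, iSupIndep
      fun u : Fin r => Submodule.span 𝔽 (Set.range (S i * C u i)))
    (hIA3 : ∀ i : Fin k,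
      (⨆ u : Fin r, Submodule.span 𝔽 (Set.range (S i * C u i))) = ⊤)
    (p : ℕ) (hp : 1 ≤ p) (X : Fin p → Finset (Fin k))
    (hXne : ∀ i, (X i).Nonempty)
    (hXdisj : ∀ i j, i ≠ j → Disjoint (X i) (X j))
    (hXspan : ∀ i : Fin p, (i : ℕ) ≠ 0 →
      (⨆ ν ∈ X i, Submodule.span 𝔽 (Set.range (S ν))) = ⊤)
    (Γ : Fin p → Fin r → Matrix (Fin l) (Fin l) 𝔽)
    (hΓ : ∀ i u, Γ i u =
      if (u : ℕ) = 0 then (1 : Matrix (Fin l) (Fin l) 𝔽) else ∑ j ∈ X i, C u j) :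
    LinearIndependent 𝔽
      (fun u : Fin p → Fin r => (List.ofFn (fun i : Fin p => Γ i (u i))).prod) ∧
    r ^ p ≤ l ^ 2 := by
  have hΓeq : (fun u : Fin p → Fin r => (List.ofFn fun i : Fin p => Γ i (u i)).prod)
      = fun u : Fin p → Fin r => (List.ofFn fun i : Fin p => Γf C (X i) (u i)).prod := by
    funext u
    have h1 : (fun i : Fin p => Γ i (u i)) = fun i : Fin p => Γf C (X i) (u i) :=
      funext fun i => by rw [hΓ]; rfl
    rw [h1]
  have hLI : LinearIndependent 𝔽
      (fun u : Fin p → Fin r => (List.ofFn (fun i : Fin p => Γ i (u i))).prod) := by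
    rw [hΓeq]
    exact Fintype.linearIndependent_iff.mpr fun g hg =>
      key S C hr hl hrl hC1 hIA1 hIA2 hIA3 p X hXne hXdisj hXspan g hg
  refine ⟨hLI, ?_⟩
  calc r ^ p = Fintype.card (Fin p → Fin r) := by simp
    _ ≤ Module.finrank 𝔽 (Matrix (Fin l) (Fin l) 𝔽) := hLI.fintype_card_le_finrank
    _ = l ^ 2 := by
        rw [Module.finrank_matrix]
        simp [sq]
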